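/- Let 0 < h ≤ w and R = [0,w] × [0,h] ⊆ ℝ². Let F : [0,1] → (ℝ² → ℝ²) be such that each F(t) is a distance-preserving map of the plane, F(0) is the identity, (t,x) ↦ F(t)(x) is continuous, and F(t)''(R) ⊆ {(x,y) | 0 ≤ y ≤ h} for all t. Then every F(t) acts on the whole plane as a horizontal translation: for each t there exists c ∈ ℝ with F(t)(x,y) = (x + c, y) for all (x,y) ∈ ℝ². -/

import Mathlib

/-- The Euclidean plane. -/
abbrev Plane := EuclideanSpace ℝ (Fin 2)

/-- The closed axis-aligned rectangle `[0, w] × [0, h]` in the Euclidean plane. -/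
def rect (w h : ℝ) : Set Plane :=
  {p | p 0 ∈ Set.Icc 0 w ∧ p 1 ∈ Set.Icc 0 h}

open scoped RealInnerProductSpace

noncomputable def pt (x y : ℝ) : Plane := !₂[x, y]
@[simp] lemma pt0 (x y : ℝ) : pt x y 0 = x := rfl
@[simp] lemma pt1 (x y : ℝ) : pt x y 1 = y := rfl
@[simp] lemma sub_coord (x y : Plane) (i : Fin 2) : (x - y) i = x i - y i := rfl
@[simp] lemma zero_coord (i : Fin 2) : (0 : Plane) i = 0 := rfl

lemma inner_coords (x y : Plane) : ⟪x, y⟫ = x 0 * y 0 + x 1 * y 1 := by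
  simp [PiLp.inner_apply, Fin.sum_univ_two]; ring

lemma isometry_inner (f : Plane → Plane) (hf : Isometry f) (p q : Plane) :
    ⟪f p - f 0, f q - f 0⟫ = ⟪p, q⟫ := by
  have h1 : ‖f p - f 0‖ = ‖p‖ := by
    rw [← dist_eq_norm, hf.dist_eq]; simp [dist_eq_norm]
  have h2 : ‖f q - f 0‖ = ‖q‖ := by
    rw [← dist_eq_norm, hf.dist_eq]; simp [dist_eq_norm]
  have h3 : ‖(f p - f 0) - (f q - f 0)‖ = ‖p - q‖ := by
    have e : f p - f 0 - (f q - f 0) = f p - f q := by abel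
    rw [e, ← dist_eq_norm, hf.dist_eq, dist_eq_norm]
  have e1 := norm_sub_sq_real (f p - f 0) (f q - f 0)
  have e2 := norm_sub_sq_real p q
  rw [h3, h1, h2] at e1
  rw [e2] at e1
  linarith

lemma expand3 (A B C : Plane) : ⟪A - B - C, A - B - C⟫
    = ⟪A,A⟫ - 2*⟪A,B⟫ - 2*⟪A,C⟫ + ⟪B,B⟫ + 2*⟪B,C⟫ + ⟪C,C⟫ := by
  simp only [inner_sub_left, inner_sub_right]
  rw [real_inner_comm B A, real_inner_comm C A, real_inner_comm C B]
  ring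

lemma key (w h u0 u1 v0 v1 b1 : ℝ) (hh : 0 < h) (hw : h ≤ w)
    (e1 : u0^2 + u1^2 = w^2) (e2 : v0^2 + v1^2 = h^2) (e3 : u0*v0 + u1*v1 = 0)
    (c1 : 0 ≤ b1) (c2 : b1 ≤ h) (c3 : 0 ≤ b1+u1) (c4 : b1+u1 ≤ h)
    (c5 : 0 ≤ b1+v1) (c6 : b1+v1 ≤ h) (c7 : 0 ≤ b1+u1+v1) (c8 : b1+u1+v1 ≤ h) :
    v1 = h ∨ v1 = -h ∨ v1 = 0 := by
  have ell : h^2*u1^2 + w^2*v1^2 = w^2*h^2 := by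
    linear_combination (h^2 - v1^2) * e1 + u0^2 * e2 + (u1*v1 - u0*v0) * e3
  by_contra hc
  push_neg at hc
  obtain ⟨n1, n2, n3⟩ := hc
  have habs : |u1| + |v1| ≤ h := by
    rcases abs_cases u1 with ⟨h1, h1'⟩ | ⟨h1, h1'⟩ <;>
      rcases abs_cases v1 with ⟨h2, h2'⟩ | ⟨h2, h2'⟩ <;> rw [h1, h2] <;> linarith
  set a := |u1| with ha
  set b := |v1| with hb
  have ha2 : a^2 = u1^2 := sq_abs u1
  have hb2 : b^2 = v1^2 := sq_abs v1
  have hbpos : 0 < b := abs_pos.2 n3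
  have hbne : b ≠ h := by
    intro he
    rcases (abs_eq (le_of_lt hh)).1 (hb ▸ he) with h' | h'
    · exact n1 h'
    · exact n2 h'
  have hble : b^2 ≤ h^2 := by nlinarith [sq_nonneg v0]
  have hblt : b < h := lt_of_le_of_ne (by nlinarith [abs_nonneg v1]) hbne
  have hw2 : h^2 ≤ w^2 := by nlinarith
  have hfact : 0 ≤ (w^2 - h^2) * (h^2 - b^2) := mul_nonneg (by linarith) (by nlinarith)
  have hu2 : a^2 ≥ h^2 - b^2 := by nlinarith
  have hanneg : 0 ≤ a := abs_nonneg u1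
  nlinarith [sq_nonneg (h - b - a), mul_pos hbpos (sub_pos.2 hblt)]

lemma const_of_three_values {f : unitInterval → ℝ} (hf : Continuous f) {a : ℝ} (ha : 0 < a)
    (h3 : ∀ t, f t = a ∨ f t = -a ∨ f t = 0) (h0 : f 0 = a) : ∀ t, f t = a := by
  intro t
  by_contra hne
  have hle : f t ≤ 0 := by
    rcases h3 t with h' | h' | h'
    · exact absurd h' hne
    · rw [h']; linarith
    · rw [h']
  have hmem : a/2 ∈ Set.Icc (f t) (f 0) := by
    rw [h0]; exact ⟨by linarith, by linarith⟩
  obtain ⟨t', ht'⟩ := intermediate_value_univ t 0 hf hmem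
  rcases h3 t' with h' | h' | h' <;> rw [ht'] at h' <;> linarith

/-- If a continuous family of distance-preserving maps starting at the identity keeps the
rectangle `[0, w] × [0, h]` (with `0 < h ≤ w`) inside the strip `0 ≤ y ≤ h` at all times,
then every map of the family is a horizontal translation of the whole plane. -/
theorem confined_rect_motion_is_horizontal_translation (w h : ℝ) (hh : 0 < h) (hhw : h ≤ w)
    (F : unitInterval → Plane → Plane)
    (hisom : ∀ t, Isometry (F t))
    (hinit : F 0 = id)
    (hcont : Continuous fun q : unitInterval × Plane => F q.1 q.2)
    (hsub : ∀ t, F t '' rect w h ⊆ {p : Plane | p 1 ∈ Set.Icc 0 h}) :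
    ∀ t, ∃ c : ℝ, ∀ p : Plane, F t p 0 = p 0 + c ∧ F t p 1 = p 1 := by
  have hw : 0 < w := lt_of_lt_of_le hh hhw
  -- membership of corners in the rectangle
  have hm0 : (0 : Plane) ∈ rect w h := by
    refine ⟨⟨?_, ?_⟩, ?_, ?_⟩ <;> simp [hw.le, hh.le]
  have hmw : pt w 0 ∈ rect w h := by
    refine ⟨⟨?_, ?_⟩, ?_, ?_⟩ <;> simp [hw.le, hh.le]
  have hmh : pt 0 h ∈ rect w h := by
    refine ⟨⟨?_, ?_⟩, ?_, ?_⟩ <;> simp [hw.le, hh.le]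
  have hmc : pt w h ∈ rect w h := by
    refine ⟨⟨?_, ?_⟩, ?_, ?_⟩ <;> simp [hw.le, hh.le]
  -- strip constraints
  have strip : ∀ (t : unitInterval) (p : Plane), p ∈ rect w h →
      0 ≤ F t p 1 ∧ F t p 1 ≤ h := fun t p hp => by
    have := hsub t (Set.mem_image_of_mem _ hp)
    exact ⟨this.1, this.2⟩
  -- inner product preservation
  have G : ∀ (t : unitInterval) (p q : Plane),
      ⟪F t p - F t 0, F t q - F t 0⟫ = ⟪p, q⟫ := fun t => isometry_inner _ (hisom t)
  -- coordinate equations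
  have e1 : ∀ t, (F t (pt w 0) 0 - F t 0 0)^2 + (F t (pt w 0) 1 - F t 0 1)^2 = w^2 := fun t => by
    have hg := G t (pt w 0) (pt w 0)
    rw [inner_coords, inner_coords] at hg
    simp only [sub_coord, pt0, pt1] at hg
    linear_combination hg
  have e2 : ∀ t, (F t (pt 0 h) 0 - F t 0 0)^2 + (F t (pt 0 h) 1 - F t 0 1)^2 = h^2 := fun t => by
    have hg := G t (pt 0 h) (pt 0 h)
    rw [inner_coords, inner_coords] at hg
    simp only [sub_coord, pt0, pt1] at hg
    linear_combination hg
  have e3 : ∀ t, (F t (pt w 0) 0 - F t 0 0) * (F t (pt 0 h) 0 - F t 0 0)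
      + (F t (pt w 0) 1 - F t 0 1) * (F t (pt 0 h) 1 - F t 0 1) = 0 := fun t => by
    have hg := G t (pt w 0) (pt 0 h)
    rw [inner_coords, inner_coords] at hg
    simp only [sub_coord, pt0, pt1] at hg
    linear_combination hg
  -- additivity at the fourth corner
  have hadd : ∀ t, F t (pt w h) 1 - F t 0 1
      = (F t (pt w 0) 1 - F t 0 1) + (F t (pt 0 h) 1 - F t 0 1) := fun t => by
    have hexp := expand3 (F t (pt w h) - F t 0) (F t (pt w 0) - F t 0) (F t (pt 0 h) - F t 0)
    rw [G t (pt w h) (pt w h), G t (pt w h) (pt w 0), G t (pt w h) (pt 0 h),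
      G t (pt w 0) (pt w 0), G t (pt w 0) (pt 0 h), G t (pt 0 h) (pt 0 h)] at hexp
    rw [inner_coords (pt w h) (pt w h), inner_coords (pt w h) (pt w 0),
      inner_coords (pt w h) (pt 0 h), inner_coords (pt w 0) (pt w 0),
      inner_coords (pt w 0) (pt 0 h), inner_coords (pt 0 h) (pt 0 h)] at hexp
    simp only [pt0, pt1] at hexp
    have hz : ⟪F t (pt w h) - F t 0 - (F t (pt w 0) - F t 0) - (F t (pt 0 h) - F t 0),
        F t (pt w h) - F t 0 - (F t (pt w 0) - F t 0) - (F t (pt 0 h) - F t 0)⟫ = 0 := by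
      rw [hexp]; ring
    have hd := inner_self_eq_zero.1 hz
    have := congrArg (fun v : Plane => v 1) hd
    simp only [sub_coord, zero_coord] at this
    linarith
  -- V takes only three values
  have hV3 : ∀ t, F t (pt 0 h) 1 - F t 0 1 = h ∨ F t (pt 0 h) 1 - F t 0 1 = -h
      ∨ F t (pt 0 h) 1 - F t 0 1 = 0 := fun t => by
    have s0 := strip t 0 hm0
    have sw := strip t (pt w 0) hmw
    have sh := strip t (pt 0 h) hmh
    have sc := strip t (pt w h) hmc
    have hc := hadd t
    exact key w h (F t (pt w 0) 0 - F t 0 0) (F t (pt w 0) 1 - F t 0 1)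
      (F t (pt 0 h) 0 - F t 0 0) (F t (pt 0 h) 1 - F t 0 1) (F t 0 1) hh hhw
      (e1 t) (e2 t) (e3 t)
      s0.1 s0.2 (by linarith [sw.1]) (by linarith [sw.2])
      (by linarith [sh.1]) (by linarith [sh.2])
      (by linarith [sc.1]) (by linarith [sc.2])
  have hVc : Continuous fun t : unitInterval => F t (pt 0 h) 1 - F t 0 1 := by
    have h1 : Continuous fun t : unitInterval => F t (pt 0 h) :=
      hcont.comp (continuous_id.prodMk continuous_const)
    have h2 : Continuous fun t : unitInterval => F t 0 :=
      hcont.comp (continuous_id.prodMk continuous_const)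
    exact ((PiLp.continuous_apply 2 _ (1 : Fin 2)).comp h1).sub
      ((PiLp.continuous_apply 2 _ (1 : Fin 2)).comp h2)
  have hV0 : F 0 (pt 0 h) 1 - F 0 0 1 = h := by
    rw [hinit]; simp
  -- by connectedness, V ≡ h
  have hVh : ∀ t, F t (pt 0 h) 1 - F t 0 1 = h := const_of_three_values hVc hh hV3 hV0
  -- consequences
  have hv0 : ∀ t, F t (pt 0 h) 0 - F t 0 0 = 0 := fun t => by
    have he := e2 t
    rw [hVh t] at he
    have : (F t (pt 0 h) 0 - F t 0 0)^2 = 0 := by linarith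
    exact pow_eq_zero_iff (by norm_num) |>.1 this
  have hu1 : ∀ t, F t (pt w 0) 1 - F t 0 1 = 0 := fun t => by
    have he := e3 t
    rw [hVh t, hv0 t] at he
    have : (F t (pt w 0) 1 - F t 0 1) * h = 0 := by linarith
    rcases mul_eq_zero.1 this with h' | h'
    · exact h'
    · exact absurd h' (ne_of_gt hh)
  have hU3 : ∀ t, F t (pt w 0) 0 - F t 0 0 = w ∨ F t (pt w 0) 0 - F t 0 0 = -w
      ∨ F t (pt w 0) 0 - F t 0 0 = 0 := fun t => by
    have he := e1 t
    rw [hu1 t] at he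
    have hsq : (F t (pt w 0) 0 - F t 0 0 - w) * (F t (pt w 0) 0 - F t 0 0 + w) = 0 := by
      linear_combination he
    rcases mul_eq_zero.1 hsq with h' | h'
    · left; linarith
    · right; left; linarith
  have hUc : Continuous fun t : unitInterval => F t (pt w 0) 0 - F t 0 0 := by
    have h1 : Continuous fun t : unitInterval => F t (pt w 0) :=
      hcont.comp (continuous_id.prodMk continuous_const)
    have h2 : Continuous fun t : unitInterval => F t 0 :=
      hcont.comp (continuous_id.prodMk continuous_const)
    exact ((PiLp.continuous_apply 2 _ (0 : Fin 2)).comp h1).sub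
      ((PiLp.continuous_apply 2 _ (0 : Fin 2)).comp h2)
  have hU0 : F 0 (pt w 0) 0 - F 0 0 0 = w := by
    rw [hinit]; simp
  have hUw : ∀ t, F t (pt w 0) 0 - F t 0 0 = w := const_of_three_values hUc hw hU3 hU0
  -- base point is fixed vertically
  have hb1 : ∀ t, F t 0 1 = 0 := fun t => by
    have s0 := strip t 0 hm0
    have sh := strip t (pt 0 h) hmh
    have := hVh t
    linarith [sh.2, s0.1]
  -- conclusion
  intro t
  refine ⟨F t 0 0, fun p => ?_⟩
  have hgh := G t p (pt 0 h)
  have hgw := G t p (pt w 0)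
  rw [inner_coords, inner_coords] at hgh hgw
  simp only [sub_coord, pt0, pt1] at hgh hgw
  rw [hv0 t, hVh t] at hgh
  rw [hUw t, hu1 t] at hgw
  constructor
  · have h' : (F t p 0 - F t 0 0) * w = p 0 * w := by linear_combination hgw
    have := mul_right_cancel₀ (ne_of_gt hw) h'
    linarith
  · have h' : (F t p 1 - F t 0 1) * h = p 1 * h := by linear_combination hgh
    have h'' := mul_right_cancel₀ (ne_of_gt hh) h'
    have := hb1 t
    linarith
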